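/- Let a : ℕ → ℝ be a sequence with a 0 = 0, and let t be a real number with 0 ≤ t < 1 such that the series ∑_{n≥1} |a n| · tⁿ is summable. Define g : [0,1) → ℝ by g(s) = exp( ∑_{m≥1} (1/m) ∑_{n≥1} (a n) · s^{n·m} ). Then ∑_{k≥1} (μ(k)/k) · log( g(t^k) ) = ∑_{n≥1} (a n) · tⁿ, where μ is the Möbius function. -/

import Mathlib

/-- The plethystic exponential `g(s) = exp(∑_{m≥1} (1/m) ∑_{n≥1} a n · s^{n·m})`
of the series `∑_{n≥1} a n · sⁿ`. -/
noncomputable def plethysticExp (a : ℕ → ℝ) (s : ℝ) : ℝ :=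
  Real.exp (∑' m : ℕ, (1 / (m + 1 : ℝ)) * ∑' n : ℕ, a n * s ^ (n * (m + 1)))

open ArithmeticFunction in
/-- Auxiliary: the inner series `h d = ∑ a n t^{n d}`. -/
noncomputable def pleH (a : ℕ → ℝ) (t : ℝ) (d : ℕ) : ℝ := ∑' n : ℕ, a n * t ^ (n * d)

open ArithmeticFunction ArithmeticFunction.Moebius in
/-- Auxiliary: the doubly indexed family. -/
noncomputable def pleF (a : ℕ → ℝ) (t : ℝ) (p : ℕ × ℕ) : ℝ :=
  ((μ p.1 : ℤ) : ℝ) / (p.1 : ℝ) * (1 / (p.2 : ℝ) * pleH a t (p.1 * p.2))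

open ArithmeticFunction ArithmeticFunction.Moebius in
lemma pleF_fiber (a : ℕ → ℝ) (t : ℝ) (d : ℕ) :
    ∑' p : (fun p : ℕ × ℕ => p.1 * p.2) ⁻¹' {d}, pleF a t p
      = if d = 1 then pleH a t 1 else 0 := by
  classical
  rcases eq_or_ne d 0 with rfl | hd
  · rw [if_neg (by norm_num)]
    have hz : ∀ p : (fun p : ℕ × ℕ => p.1 * p.2) ⁻¹' {0}, pleF a t (p : ℕ × ℕ) = 0 := by
      rintro ⟨⟨x, y⟩, hp⟩
      have hxy : x * y = 0 := hp
      rcases Nat.mul_eq_zero.mp hxy with rfl | rfl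
      · simp [pleF]
      · simp [pleF]
    simp only [hz, tsum_zero]
  · rw [show (fun p : ℕ × ℕ => p.1 * p.2) ⁻¹' {d} = ↑d.divisorsAntidiagonal by
        ext p; simp [Nat.mem_divisorsAntidiagonal, hd],
      Finset.tsum_subtype' d.divisorsAntidiagonal (pleF a t)]
    have hstep : ∀ p ∈ d.divisorsAntidiagonal,
        pleF a t p = ((μ p.1 : ℤ) : ℝ) * (pleH a t d / (d : ℝ)) := by
      intro p hp
      obtain ⟨h1, h2⟩ := Nat.ne_zero_of_mem_divisorsAntidiagonal hp
      have hmul : p.1 * p.2 = d := (Nat.mem_divisorsAntidiagonal.mp hp).1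
      have hx : (p.1 : ℝ) ≠ 0 := Nat.cast_ne_zero.mpr h1
      have hy : (p.2 : ℝ) ≠ 0 := Nat.cast_ne_zero.mpr h2
      have hc : (p.1 : ℝ) * (p.2 : ℝ) = (d : ℝ) := by exact_mod_cast congrArg Nat.cast hmul
      rw [pleF, hmul, ← hc]
      field_simp
    rw [Finset.sum_congr rfl hstep, ← Finset.sum_mul]
    have hμ : ∑ p ∈ d.divisorsAntidiagonal, ((μ p.1 : ℤ) : ℝ) = if d = 1 then 1 else 0 := by
      have h := congrArg (fun f : ArithmeticFunction ℝ => f d)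
        (coe_moebius_mul_coe_zeta (R := ℝ))
      simp only [mul_apply, one_apply] at h
      rw [← h]
      refine Finset.sum_congr rfl fun p hp => ?_
      obtain ⟨-, h2⟩ := Nat.ne_zero_of_mem_divisorsAntidiagonal hp
      rw [intCoe_apply, natCoe_apply, zeta_apply_ne h2, Nat.cast_one, mul_one]
    rw [hμ]
    rcases eq_or_ne d 1 with rfl | hd1
    · simp
    · simp [hd1]

set_option maxHeartbeats 1000000 in
open ArithmeticFunction ArithmeticFunction.Moebius in
/-- The plethystic logarithm `∑_{k≥1} (μ(k)/k) · log(g(t^k))` recovers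
`f(t) = ∑_{n≥1} a n · tⁿ` from its plethystic exponential `g`. -/
theorem plethystic_logarithm_inverse
    (a : ℕ → ℝ) (ha : a 0 = 0) (t : ℝ) (ht0 : 0 ≤ t) (ht1 : t < 1)
    (hsum : Summable fun n : ℕ => |a n| * t ^ n) :
    ∑' k : ℕ, ((ArithmeticFunction.moebius (k + 1) : ℝ) / (k + 1)) *
        Real.log (plethysticExp a (t ^ (k + 1)))
      = ∑' n : ℕ, a n * t ^ n := by
  classical
  set C : ℝ := ∑' n : ℕ, |a n| * t ^ n with hCdef
  have hC0 : 0 ≤ C := tsum_nonneg fun n => mul_nonneg (abs_nonneg _) (pow_nonneg ht0 _)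
  -- pointwise bound
  have hpt : ∀ d : ℕ, 1 ≤ d → ∀ n : ℕ, |a n * t ^ (n * d)| ≤ (|a n| * t ^ n) * t ^ (d - 1) := by
    intro d hd n
    obtain ⟨e, rfl⟩ := Nat.exists_eq_add_of_le hd
    simp only [Nat.add_sub_cancel_left]
    rcases Nat.eq_zero_or_pos n with rfl | hn
    · simp [ha]
    · have h1 : n * (1 + e) = n + n * e := by ring
      rw [abs_mul, abs_of_nonneg (pow_nonneg ht0 _), h1, pow_add, ← mul_assoc]
      exact mul_le_mul_of_nonneg_left
        (pow_le_pow_of_le_one ht0 ht1.le (Nat.le_mul_of_pos_left e hn))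
        (mul_nonneg (abs_nonneg _) (pow_nonneg ht0 _))
  have habs : ∀ d : ℕ, 1 ≤ d → |pleH a t d| ≤ C * t ^ (d - 1) := by
    intro d hd
    have hs2 : Summable fun n : ℕ => |a n * t ^ (n * d)| :=
      Summable.of_nonneg_of_le (fun n => abs_nonneg _) (hpt d hd) (hsum.mul_right _)
    calc |pleH a t d| ≤ ∑' n : ℕ, |a n * t ^ (n * d)| := by
          simpa only [Real.norm_eq_abs, pleH] using
            norm_tsum_le_tsum_norm (f := fun n : ℕ => a n * t ^ (n * d))
              (by simpa only [Real.norm_eq_abs] using hs2)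
      _ ≤ ∑' n : ℕ, (|a n| * t ^ n) * t ^ (d - 1) :=
          Summable.tsum_le_tsum (hpt d hd) hs2 (hsum.mul_right _)
      _ = C * t ^ (d - 1) := by rw [tsum_mul_right]
  -- summability of the double family
  have hgeo : Summable fun k : ℕ => t ^ k := summable_geometric_of_lt_one ht0 ht1
  have hshift : Summable fun k : ℕ => t ^ (k - 1) :=
    (summable_nat_add_iff 1).1 (by simpa using hgeo)
  have hb : Summable fun p : ℕ × ℕ => (C * t ^ (p.1 - 1)) * t ^ (p.2 - 1) :=
    Summable.mul_of_nonneg (hshift.mul_left C) hshift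
      (fun k => mul_nonneg hC0 (pow_nonneg ht0 _)) (fun k => pow_nonneg ht0 _)
  have hFb : ∀ p : ℕ × ℕ, ‖pleF a t p‖ ≤ (C * t ^ (p.1 - 1)) * t ^ (p.2 - 1) := by
    rintro ⟨x, y⟩
    rcases Nat.eq_zero_or_pos x with rfl | hx
    · simp only [pleF]
      simp only [Nat.cast_zero, div_zero, zero_mul, norm_zero]
      positivity
    rcases Nat.eq_zero_or_pos y with rfl | hy
    · simp only [pleF]
      simp only [Nat.cast_zero, div_zero, zero_mul, mul_zero, zero_div, norm_zero]
      positivity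
    have h1 : |((μ x : ℤ) : ℝ) / (x : ℝ)| ≤ 1 := by
      rw [abs_div]
      refine div_le_one_of_le₀ ?_ (abs_nonneg _)
      calc |((μ x : ℤ) : ℝ)| ≤ 1 := by exact_mod_cast abs_moebius_le_one
        _ ≤ |(x : ℝ)| := by
            rw [abs_of_nonneg (Nat.cast_nonneg x)]; exact_mod_cast hx
    have h2 : |1 / (y : ℝ)| ≤ 1 := by
      rw [abs_div, abs_one]
      refine div_le_one_of_le₀ ?_ (abs_nonneg _)
      rw [abs_of_nonneg (Nat.cast_nonneg y)]; exact_mod_cast hy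
    have h3 : |pleH a t (x * y)| ≤ C * t ^ (x * y - 1) :=
      habs _ (Nat.one_le_iff_ne_zero.mpr (Nat.mul_ne_zero hx.ne' hy.ne'))
    have h4 : t ^ (x * y - 1) ≤ t ^ (x - 1) * t ^ (y - 1) := by
      rw [← pow_add]
      refine pow_le_pow_of_le_one ht0 ht1.le ?_
      obtain ⟨x', rfl⟩ := Nat.exists_eq_add_of_le hx
      obtain ⟨y', rfl⟩ := Nat.exists_eq_add_of_le hy
      have hxy : (1 + x') * (1 + y') = 1 + (x' + y' + x' * y') := by ring
      rw [hxy]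
      omega
    calc ‖pleF a t (x, y)‖
        = |((μ x : ℤ) : ℝ) / (x : ℝ)| * (|1 / (y : ℝ)| * |pleH a t (x * y)|) := by
          rw [Real.norm_eq_abs, pleF, abs_mul, abs_mul]
      _ ≤ 1 * (1 * (C * t ^ (x * y - 1))) := by
          gcongr
      _ = C * t ^ (x * y - 1) := by ring
      _ ≤ C * (t ^ (x - 1) * t ^ (y - 1)) := mul_le_mul_of_nonneg_left h4 hC0
      _ = (C * t ^ (x - 1)) * t ^ (y - 1) := by ring
  have hF : Summable (pleF a t) := Summable.of_norm_bounded hb hFb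
  -- the total sum equals pleH a t 1 via fiberwise summation
  have hfibsum : HasSum (fun d : ℕ => if d = 1 then pleH a t 1 else 0)
      (∑' p : ℕ × ℕ, pleF a t p) := by
    have h := hF.hasSum.tsum_fiberwise (fun p => p.1 * p.2)
    simpa only [pleF_fiber] using h
  have htot : ∑' p : ℕ × ℕ, pleF a t p = pleH a t 1 :=
    hfibsum.unique (hasSum_ite_eq 1 _)
  -- identify each term of the LHS
  have hT : ∀ k : ℕ, ((μ (k + 1) : ℤ) : ℝ) / ((k : ℝ) + 1) *
      Real.log (plethysticExp a (t ^ (k + 1)))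
      = ∑' m : ℕ, pleF a t (k + 1, m + 1) := by
    intro k
    rw [plethysticExp, Real.log_exp]
    have hin : ∀ m : ℕ, (∑' n : ℕ, a n * (t ^ (k + 1)) ^ (n * (m + 1)))
        = pleH a t ((k + 1) * (m + 1)) := by
      intro m
      rw [pleH]
      refine tsum_congr fun n => ?_
      rw [← pow_mul, show (k + 1) * (n * (m + 1)) = n * ((k + 1) * (m + 1)) from by ring]
    rw [← tsum_mul_left]
    refine tsum_congr fun m => ?_
    rw [hin m]
    simp only [pleF]
    push_cast
    ring
  have hrow : ∀ x : ℕ, ∑' m : ℕ, pleF a t (x, m) = ∑' m : ℕ, pleF a t (x, m + 1) := by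
    intro x
    rw [Summable.tsum_eq_zero_add (hF.prod_factor x)]
    simp [pleF]
  have hcol : Summable fun x : ℕ => ∑' m : ℕ, pleF a t (x, m) := hF.prod
  calc ∑' k : ℕ, ((μ (k + 1) : ℤ) : ℝ) / ((k : ℝ) + 1) *
        Real.log (plethysticExp a (t ^ (k + 1)))
      = ∑' k : ℕ, ∑' m : ℕ, pleF a t (k + 1, m + 1) := tsum_congr hT
    _ = ∑' k : ℕ, (fun x : ℕ => ∑' m : ℕ, pleF a t (x, m)) (k + 1) := by
        exact tsum_congr fun k => (hrow (k + 1)).symm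
    _ = ∑' x : ℕ, ∑' m : ℕ, pleF a t (x, m) := by
        symm
        rw [Summable.tsum_eq_zero_add hcol]
        have h0 : ∑' m : ℕ, pleF a t (0, m) = 0 := by simp [pleF]
        rw [h0, zero_add]
    _ = ∑' p : ℕ × ℕ, pleF a t p := (Summable.tsum_prod hF).symm
    _ = pleH a t 1 := htot
    _ = ∑' n : ℕ, a n * t ^ n := by simp [pleH]
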